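/- Let G = (V,E) be a finite block graph. Then there exists a partition 𝒞* of V into nonempty parts that maximizes the utilitarian welfare Σ_{C∈𝒞} 2|E(G[C])|/|C| over all partitions of V, and in which every part C ∈ 𝒞* induces either a clique or a star in G. -/

import Mathlib

set_option linter.unusedSectionVars false
set_option linter.unusedVariables false
set_option maxHeartbeats 1600000

open Finset

/-- The utilitarian welfare `2|E(G[C])|/|C|` of a coalition `C` in a simple fractional
hedonic game: twice the number of edges of the induced subgraph, counted here as the
number of ordered adjacent pairs inside `C`, divided by `|C|`. -/
def uw {V : Type*} [DecidableEq V] (G : SimpleGraph V) [DecidableRel G.Adj]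
    (C : Finset V) : ℚ :=
  (((C ×ˢ C).filter fun p => G.Adj p.1 p.2).card : ℚ) / (C.card : ℚ)

/-- `C` induces a star in `G`: some center `c ∈ C` is adjacent to every other vertex of `C`,
and the remaining vertices form an independent set. -/
def IsStar {V : Type*} (G : SimpleGraph V) (C : Finset V) : Prop :=
  ∃ c ∈ C, (∀ v ∈ C, v ≠ c → G.Adj c v) ∧
    ∀ u ∈ C, ∀ v ∈ C, u ≠ c → v ≠ c → ¬ G.Adj u v

/-- `G` is a block graph: every `S` of size at least 3 inducing a 2-connected subgraph
(connected and remaining connected after deleting any vertex) is a clique. -/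
def IsBlockGraph {V : Type*} (G : SimpleGraph V) : Prop :=
  ∀ S : Set V, 3 ≤ S.ncard → (G.induce S).Connected →
    (∀ v ∈ S, (G.induce (S \ {v})).Connected) → G.IsClique S

section Infra

variable {V : Type*} [DecidableEq V] (G : SimpleGraph V) [DecidableRel G.Adj]

/-- ordered edge count inside S -/
def ec (S : Finset V) : ℕ := ((S ×ˢ S).filter fun p => G.Adj p.1 p.2).card

lemma ec_eq_sum (S : Finset V) : ec G S = ∑ a ∈ S, ∑ b ∈ S, if G.Adj a b then 1 else 0 := by
  rw [ec, Finset.card_filter, Finset.sum_product]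

/-- cross count -/
def crossc (X Y : Finset V) : ℕ := ∑ a ∈ X, ∑ b ∈ Y, if G.Adj a b then 1 else 0

lemma crossc_comm (X Y : Finset V) : crossc G X Y = crossc G Y X := by
  rw [crossc, Finset.sum_comm, crossc]
  refine Finset.sum_congr rfl fun a _ => Finset.sum_congr rfl fun b _ => ?_
  simp [G.adj_comm]

lemma ec_union {X Y : Finset V} (h : Disjoint X Y) :
    ec G (X ∪ Y) = ec G X + ec G Y + 2 * crossc G X Y := by
  rw [ec_eq_sum, ec_eq_sum, ec_eq_sum]
  rw [Finset.sum_union h]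
  have h1 : ∀ a, ∑ b ∈ X ∪ Y, (if G.Adj a b then 1 else 0)
      = (∑ b ∈ X, if G.Adj a b then 1 else 0) + ∑ b ∈ Y, if G.Adj a b then 1 else 0 :=
    fun a => Finset.sum_union h
  simp_rw [h1, Finset.sum_add_distrib]
  have e1 : (∑ a ∈ X, ∑ b ∈ Y, if G.Adj a b then 1 else 0) = crossc G X Y := rfl
  have e2 : (∑ a ∈ Y, ∑ b ∈ X, if G.Adj a b then 1 else 0) = crossc G Y X := rfl
  rw [e1, e2, crossc_comm G Y X]
  ring

lemma crossc_union_left {X Y Z : Finset V} (h : Disjoint X Y) :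
    crossc G (X ∪ Y) Z = crossc G X Z + crossc G Y Z := Finset.sum_union h

lemma ec_mono {X Y : Finset V} (h : X ⊆ Y) : ec G X ≤ ec G Y :=
  Finset.card_le_card (Finset.filter_subset_filter _ (Finset.product_subset_product h h))

lemma ec_clique {S : Finset V} (h : G.IsClique (S : Set V)) :
    ec G S = S.card * (S.card - 1) := by
  rw [ec_eq_sum]
  have : ∀ a ∈ S, (∑ b ∈ S, if G.Adj a b then 1 else 0) = S.card - 1 := by
    intro a ha
    rw [← Finset.card_filter]
    have : S.filter (fun b => G.Adj a b) = S.erase a := by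
      ext b
      simp only [Finset.mem_filter, Finset.mem_erase]
      constructor
      · rintro ⟨hb, hadj⟩; exact ⟨fun e => G.irrefl (e ▸ hadj), hb⟩
      · rintro ⟨hne, hb⟩; exact ⟨hb, h ha hb (Ne.symm hne)⟩
    rw [this, Finset.card_erase_of_mem ha]
  rw [Finset.sum_congr rfl this]
  simp [Finset.sum_const, mul_comm]

lemma crossc_pos {X Y : Finset V} {a b : V} (ha : a ∈ X) (hb : b ∈ Y) (hab : G.Adj a b) :
    1 ≤ crossc G X Y := by
  rw [crossc]
  calc 1 = ∑ b' ∈ {b}, if G.Adj a b' then 1 else 0 := by simp [Finset.filter_singleton, hab]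
  _ ≤ ∑ b' ∈ Y, if G.Adj a b' then 1 else 0 := by
      apply Finset.sum_le_sum_of_subset (Finset.singleton_subset_iff.2 hb)
  _ ≤ _ := by
      apply Finset.single_le_sum (f := fun a => ∑ b' ∈ Y, if G.Adj a b' then 1 else 0)
        (fun i _ => Nat.zero_le _) ha

/-- one adjacency step inside `S` -/
def Stp (S : Finset V) (a b : V) : Prop := a ∈ S ∧ b ∈ S ∧ G.Adj a b

/-- connectivity inside `S` (reflexive even for elements outside `S`) -/
def Conn (S : Finset V) : V → V → Prop := Relation.ReflTransGen (Stp G S)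

variable {G}

lemma Conn.mono {S T : Finset V} (hST : S ⊆ T) {a b : V} (h : Conn G S a b) :
    Conn G T a b := by
  refine Relation.ReflTransGen.mono ?_ _ _ h
  rintro x y ⟨hx, hy, hxy⟩
  exact ⟨hST hx, hST hy, hxy⟩

lemma Stp.symm {S : Finset V} {a b : V} (h : Stp G S a b) : Stp G S b a :=
  ⟨h.2.1, h.1, h.2.2.symm⟩

lemma Conn.symm {S : Finset V} {a b : V} (h : Conn G S a b) : Conn G S b a :=
  by haveI : Std.Symm (Stp G S) := ⟨fun _ _ h => Stp.symm h⟩; exact (Relation.ReflTransGen.symmetric (r := Stp G S)).symm _ _ h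

lemma Conn.trans {S : Finset V} {a b c : V} (h : Conn G S a b) (h' : Conn G S b c) :
    Conn G S a c := Relation.ReflTransGen.trans h h'

lemma Conn.refl {S : Finset V} (a : V) : Conn G S a a := Relation.ReflTransGen.refl

lemma conn_of_adj {S : Finset V} {a b : V} (ha : a ∈ S) (hb : b ∈ S) (h : G.Adj a b) :
    Conn G S a b := Relation.ReflTransGen.single ⟨ha, hb, h⟩

lemma Conn.mem_right {S : Finset V} {a b : V} (hne : a ≠ b) (h : Conn G S a b) : b ∈ S := by
  rcases Relation.ReflTransGen.cases_tail h with rfl | ⟨c, _, hc⟩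
  · exact absurd rfl hne
  · exact hc.2.1

/-- first step -/
lemma Conn.head_step {S : Finset V} {a b : V} (hne : a ≠ b) (h : Conn G S a b) :
    ∃ c, Stp G S a c ∧ Conn G S c b := by
  rcases Relation.ReflTransGen.cases_head h with rfl | ⟨c, hc, hcb⟩
  · exact absurd rfl hne
  · exact ⟨c, hc, hcb⟩

/-- the class of `u` in `S` -/
noncomputable def cls (G : SimpleGraph V) (S : Finset V) (u : V) : Finset V :=
  letI := Classical.decPred (fun y => Conn G S u y)
  S.filter (fun y => Conn G S u y)

lemma mem_cls {S : Finset V} {u y : V} : y ∈ cls G S u ↔ y ∈ S ∧ Conn G S u y := by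
  classical
  rw [cls]
  exact Finset.mem_filter

lemma cls_subset {S : Finset V} {u : V} : cls G S u ⊆ S := fun y hy => (mem_cls.1 hy).1

lemma mem_cls_self {S : Finset V} {u : V} (hu : u ∈ S) : u ∈ cls G S u :=
  mem_cls.2 ⟨hu, Conn.refl u⟩

/-- neighbors (inside S) of class members lie in the class -/
lemma cls_closed {S : Finset V} {u y w : V} (hy : y ∈ cls G S u) (hw : w ∈ S)
    (hadj : G.Adj y w) : w ∈ cls G S u := by
  rcases mem_cls.1 hy with ⟨hyS, hc⟩
  exact mem_cls.2 ⟨hw, hc.trans (conn_of_adj hyS hw hadj)⟩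

/-- a connection within `S` starting at `u` stays within `cls G S u` -/
lemma Conn.restrict {S : Finset V} {u y : V} (hu : u ∈ S) (h : Conn G S u y) :
    Conn G (cls G S u) u y := by
  induction h with
  | refl => exact Conn.refl u
  | tail hub hstep ih =>
    rename_i b c
    have hb : b ∈ cls G S u := mem_cls.2 ⟨hstep.1, hub⟩
    have hc : c ∈ cls G S u := cls_closed hb hstep.2.1 hstep.2.2
    exact ih.trans (conn_of_adj hb hc hstep.2.2)

lemma cls_eq_of_conn {S : Finset V} {u y : V} (hy : y ∈ cls G S u) :
    cls G S y = cls G S u := by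
  rcases mem_cls.1 hy with ⟨hyS, hc⟩
  ext z
  simp only [mem_cls]
  exact ⟨fun ⟨hz, h⟩ => ⟨hz, hc.trans h⟩, fun ⟨hz, h⟩ => ⟨hz, hc.symm.trans h⟩⟩

/-- reaching `v` from outside: last-hop neighbour of `v` reached avoiding `v` -/
lemma conn_to_neighbor {C : Finset V} {v a : V} (ha : a ∈ C.erase v) (h : Conn G C a v) :
    ∃ w ∈ C.erase v, G.Adj v w ∧ Conn G (C.erase v) a w := by
  revert ha
  induction h using Relation.ReflTransGen.head_induction_on with
  | refl => intro hv; exact absurd rfl (Finset.mem_erase.1 hv).1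
  | head hstep hconn ih =>
    rename_i x b
    intro hx
    by_cases hb : b = v
    · subst hb
      exact ⟨x, hx, hstep.2.2.symm, Conn.refl x⟩
    · have hbe : b ∈ C.erase v := Finset.mem_erase.2 ⟨hb, hstep.2.1⟩
      obtain ⟨w, hw, hadj, hconn'⟩ := ih hbe
      exact ⟨w, hw, hadj, (conn_of_adj hx hbe hstep.2.2).trans hconn'⟩

/-- conn implies reachability in the induced subgraph -/
lemma reach_of_conn {S : Finset V} {x y : V} (hx : x ∈ S) (h : Conn G S x y) :
    ∀ (hy : y ∈ S), (G.induce (S : Set V)).Reachable ⟨x, hx⟩ ⟨y, hy⟩ := by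
  induction h with
  | refl => intro hy; rfl
  | tail hab hstep ih =>
    intro hc
    refine (ih hstep.1).trans (SimpleGraph.Adj.reachable ?_)
    exact hstep.2.2

lemma conn_induced {S : Finset V} (hne : S.Nonempty)
    (h : ∀ x ∈ S, ∀ y ∈ S, Conn G S x y) : (G.induce (S : Set V)).Connected := by
  rw [SimpleGraph.connected_iff]
  refine ⟨fun a b => ?_, ⟨⟨hne.choose, hne.choose_spec⟩⟩⟩
  obtain ⟨x, hx⟩ := a
  obtain ⟨y, hy⟩ := b
  have hx' : x ∈ S := hx
  have hy' : y ∈ S := hy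
  exact reach_of_conn hx' (h x hx' y hy') hy'

/-- extract a simple path realizing a connection -/
lemma exists_path {S : Finset V} {w1 w2 : V} (h1 : w1 ∈ S) (h2 : w2 ∈ S)
    (hc : Conn G S w1 w2) :
    ∃ l : List V, l.Chain' G.Adj ∧ l.Nodup ∧ (∀ x ∈ l, x ∈ S) ∧
      l.head? = some w1 ∧ l.getLast? = some w2 := by
  obtain ⟨p⟩ := reach_of_conn h1 hc h2
  let q := p.toPath
  refine ⟨q.1.support.map Subtype.val, ?_, ?_, ?_, ?_, ?_⟩
  · exact List.isChain_map_of_isChain Subtype.val (fun a b hab => hab) q.1.isChain_adj_support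
  · exact q.2.support_nodup.map Subtype.val_injective
  · intro x hx
    obtain ⟨a, _, rfl⟩ := List.mem_map.1 hx
    exact a.2
  · rw [q.1.support_eq_cons]; rfl
  · rw [List.getLast?_map,
      List.getLast?_eq_getLast_of_ne_nil q.1.support_ne_nil]
    simp

/-- from the head of a chain one can reach every list element inside the list's vertex set -/
lemma chain_conn_aux (tl : List V) : ∀ (b : V), (b :: tl).Chain' G.Adj →
    ∀ x ∈ b :: tl, Conn G (b :: tl).toFinset b x := by
  induction tl with
  | nil =>
    intro b _ x hx
    obtain rfl : x = b := by simpa using hx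
    exact Conn.refl x
  | cons c tl2 ih =>
    intro b hch x hx
    obtain ⟨hbc, hch'⟩ := List.isChain_cons_cons.1 hch
    rcases List.mem_cons.1 hx with rfl | hx'
    · exact Conn.refl _
    · have h1 := ih c hch' x hx'
      have hsub : (c :: tl2).toFinset ⊆ (b :: c :: tl2).toFinset := by
        intro y hy; simp at hy ⊢; tauto
      exact (conn_of_adj (by simp) (by simp) hbc).trans (h1.mono hsub)

lemma chain_conn (l : List V) (hch : l.Chain' G.Adj) {a : V} (ha : l.head? = some a) :
    ∀ x ∈ l, Conn G l.toFinset a x := by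
  cases l with
  | nil => simp at ha
  | cons b tl =>
    obtain rfl : a = b := by simpa using ha.symm
    exact fun x hx => chain_conn_aux _ _ hch x hx

lemma chain_conn_rev (l : List V) (hch : l.Chain' G.Adj) {a : V} (ha : l.getLast? = some a) :
    ∀ x ∈ l, Conn G l.toFinset a x := by
  intro x hx
  have hch' : l.reverse.Chain' G.Adj := by
    refine List.isChain_reverse.2 ?_
    exact hch.imp fun a b h => h.symm
  have hh : l.reverse.head? = some a := by rwa [List.head?_reverse]
  have := chain_conn l.reverse hch' hh x (by simpa using hx)
  simpa using this.mono (by simp)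

/-- the key block-graph lemma : two common neighbours of `v` that are connected avoiding `v`
are adjacent. -/
lemma keyAdj (hG : IsBlockGraph G) {S : Finset V} {v w1 w2 : V} (hv : v ∉ S)
    (h1 : w1 ∈ S) (h2 : w2 ∈ S) (hvw1 : G.Adj v w1) (hvw2 : G.Adj v w2)
    (hne : w1 ≠ w2) (hc : Conn G S w1 w2) : G.Adj w1 w2 := by
  obtain ⟨l, hch, hnd, hmem, hhd, hlast⟩ := exists_path h1 h2 hc
  set T : Finset V := l.toFinset with hT
  have hvT : v ∉ T := fun h => hv (hmem v (List.mem_toFinset.1 h))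
  have hw1l : w1 ∈ l := by
    cases l with
    | nil => simp at hhd
    | cons b tl => simp_all
  have hw2l : w2 ∈ l := by
    have := List.mem_getLast?_eq_getLast (l := l) (x := w2) (by rw [hlast]; rfl)
    obtain ⟨h', rfl⟩ := this
    exact List.getLast_mem h'
  set S' : Finset V := insert v T with hS'
  have hw1T : w1 ∈ T := List.mem_toFinset.2 hw1l
  have hw2T : w2 ∈ T := List.mem_toFinset.2 hw2l
  -- cardinality
  have hcard : 3 ≤ S'.card := by
    have hsub : {v, w1, w2} ⊆ S' := by
      intro x hx
      simp only [Finset.mem_insert, Finset.mem_singleton] at hx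
      rcases hx with rfl | rfl | rfl
      · exact Finset.mem_insert_self _ _
      · exact Finset.mem_insert_of_mem hw1T
      · exact Finset.mem_insert_of_mem hw2T
    have h3 : ({v, w1, w2} : Finset V).card = 3 := by
      rw [Finset.card_insert_of_notMem, Finset.card_insert_of_notMem, Finset.card_singleton]
      · simp [hne]
      · simp only [Finset.mem_insert, Finset.mem_singleton]
        push_neg
        exact ⟨fun h => hv (h ▸ h1), fun h => hv (h ▸ h2)⟩
    calc 3 = ({v, w1, w2} : Finset V).card := h3.symm
    _ ≤ S'.card := Finset.card_le_card hsub
  -- connectivity of S' via hub v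
  have hub : ∀ x ∈ S', Conn G S' v x := by
    intro x hx
    rcases Finset.mem_insert.1 hx with rfl | hxT
    · exact Conn.refl x
    · have hx' : x ∈ l := List.mem_toFinset.1 hxT
      have := chain_conn l hch hhd x hx'
      have h1' : Conn G S' w1 x := this.mono (Finset.subset_insert _ _)
      exact (conn_of_adj (Finset.mem_insert_self _ _) (Finset.mem_insert_of_mem hw1T)
        hvw1).trans h1'
  -- connectivity after deleting z
  have hdel : ∀ z ∈ S', ∀ x ∈ S'.erase z, ∀ y ∈ S'.erase z, Conn G (S'.erase z) x y := by
    intro z hz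
    rcases Finset.mem_insert.1 hz with rfl | hzT
    · -- delete v : remaining is T, use chain connectivity from w1
      have hEq : S'.erase z = T := by
        rw [hS', Finset.erase_insert hvT]
      intro x hx y hy
      rw [hEq] at hx hy ⊢
      have cx := chain_conn l hch hhd x (List.mem_toFinset.1 hx)
      have cy := chain_conn l hch hhd y (List.mem_toFinset.1 hy)
      exact cx.symm.trans cy
    · -- delete z ∈ l
      have hzl : z ∈ l := List.mem_toFinset.1 hzT
      obtain ⟨l1, l2, rfl⟩ := List.append_of_mem hzl
      have hzv : z ≠ v := fun h => hvT (h ▸ hzT)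
      have hnd' := hnd
      rw [List.nodup_append] at hnd'
      obtain ⟨hnd1, hnd2z, hdj⟩ := hnd'
      have hz1 : z ∉ l1 := fun h => hdj z h z List.mem_cons_self rfl
      have hz2 : z ∉ l2 := (List.nodup_cons.1 hnd2z).1
      have hnd2 : l2.Nodup := (List.nodup_cons.1 hnd2z).2
      obtain ⟨hch1, hch2z, hlink⟩ := List.isChain_append.1 hch
      have hch2 : l2.Chain' G.Adj := hch2z.tail
      set E : Finset V := insert v (l1.toFinset ∪ l2.toFinset) with hE
      have hEeq : S'.erase z = E := by
        ext x
        simp only [hE, hS', hT, Finset.mem_erase, Finset.mem_insert, Finset.mem_union,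
          List.mem_toFinset, List.mem_append, List.mem_cons]
        constructor
        · rintro ⟨hxz, rfl | hx1 | rfl | hx2⟩
          · exact Or.inl rfl
          · exact Or.inr (Or.inl hx1)
          · exact absurd rfl hxz
          · exact Or.inr (Or.inr hx2)
        · rintro (rfl | hx1 | hx2)
          · exact ⟨Ne.symm hzv, Or.inl rfl⟩
          · exact ⟨fun h => hz1 (h ▸ hx1), Or.inr (Or.inl hx1)⟩
          · exact ⟨fun h => hz2 (h ▸ hx2), Or.inr (Or.inr (Or.inr hx2))⟩
      rw [hEeq]
      have hvE : v ∈ E := Finset.mem_insert_self _ _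
      -- hub v within E
      have hubE : ∀ x ∈ E, Conn G E v x := by
        intro x hx
        rcases Finset.mem_insert.1 hx with rfl | hxU
        · exact Conn.refl x
        rcases Finset.mem_union.1 hxU with hx1 | hx2
        · -- via w1 and prefix l1
          have hx1' : x ∈ l1 := List.mem_toFinset.1 hx1
          cases l1 with
          | nil => simp at hx1'
          | cons b tl =>
            have hbw : b = w1 := by simpa using hhd
            subst hbw
            have hcx : Conn G (b :: tl).toFinset b x := chain_conn_aux _ _ hch1 x hx1'
            have hsub : (b :: tl).toFinset ⊆ E := by
              intro y hy
              exact Finset.mem_insert_of_mem (Finset.mem_union_left _ hy)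
            have hbE : b ∈ E :=
              Finset.mem_insert_of_mem (Finset.mem_union_left _ (by simp))
            exact (conn_of_adj hvE hbE hvw1).trans (hcx.mono hsub)
        · -- via w2 and suffix l2
          have hx2' : x ∈ l2 := List.mem_toFinset.1 hx2
          have hl2ne : l2 ≠ [] := fun h => by simp [h] at hx2'
          have hlast2 : l2.getLast? = some w2 := by
            rw [List.getLast?_append_of_ne_nil (l₁ := l1) (by simp [hl2ne])] at hlast
            have : (z :: l2) = [z] ++ l2 := rfl
            rw [this, List.getLast?_append_of_ne_nil (l₁ := [z]) hl2ne] at hlast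
            exact hlast
          have hcx : Conn G l2.toFinset w2 x := chain_conn_rev l2 hch2 hlast2 x hx2'
          have hsub : l2.toFinset ⊆ E := by
            intro y hy
            exact Finset.mem_insert_of_mem (Finset.mem_union_right _ hy)
          have hw2E : w2 ∈ E := hsub (List.mem_toFinset.2 (List.mem_of_mem_getLast? (by
            rw [hlast2]; rfl)))
          exact (conn_of_adj hvE hw2E hvw2).trans (hcx.mono hsub)
      exact fun x hx y hy => (hubE x hx).symm.trans (hubE y hy)
  -- apply the block-graph hypothesis
  have hS'ne : S'.Nonempty := ⟨v, Finset.mem_insert_self _ _⟩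
  have hclique : G.IsClique (S' : Set V) := by
    refine hG (S' : Set V) (by rw [Set.ncard_coe_finset]; exact hcard) ?_ ?_
    · exact conn_induced hS'ne fun x hx y hy => (hub x hx).symm.trans (hub y hy)
    · intro z hz
      have hz' : z ∈ S' := hz
      rw [← Finset.coe_singleton, ← Finset.coe_sdiff]
      have : S' \ {z} = S'.erase z := by
        rw [Finset.sdiff_singleton_eq_erase]
      rw [this]
      refine conn_induced ?_ (hdel z hz')
      rw [← Finset.card_pos, Finset.card_erase_of_mem hz']
      omega
  exact hclique (by exact_mod_cast Finset.mem_insert_of_mem hw1T)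
    (by exact_mod_cast Finset.mem_insert_of_mem hw2T) hne

/-- a connected set on n vertices has at least n-1 edges (ordered count ≥ 2(n-1)) -/
lemma ec_lower : ∀ (n : ℕ) (B : Finset V), B.card ≤ n →
    (∀ x ∈ B, ∀ y ∈ B, Conn G B x y) → 2 * (B.card - 1) ≤ ec G B := by
  intro n
  induction n with
  | zero => intro B hB _; interval_cases h : B.card <;> simp
  | succ n ih =>
    intro B hB hconn
    by_cases hsmall : B.card ≤ 1
    · have : B.card - 1 = 0 := by omega
      rw [this]; simp
    push_neg at hsmall
    obtain ⟨v₀, hv₀, z, hz, hne⟩ := Finset.one_lt_card.1 hsmall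
    have hne' : z ≠ v₀ := hne.symm
    set S0 := B.erase v₀ with hS0
    have hzS0 : z ∈ S0 := Finset.mem_erase.2 ⟨hne', hz⟩
    set D := cls G S0 z with hD
    have hzD : z ∈ D := mem_cls_self hzS0
    have hDS0 : D ⊆ S0 := cls_subset
    have hDB : D ⊆ B := hDS0.trans (Finset.erase_subset _ _)
    have hv₀D : v₀ ∉ D := fun h => (Finset.mem_erase.1 (hDS0 h)).1 rfl
    set R := B \ D with hR
    have hv₀R : v₀ ∈ R := Finset.mem_sdiff.2 ⟨hv₀, hv₀D⟩
    have hzR : z ∉ R := fun h => (Finset.mem_sdiff.1 h).2 hzD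
    -- connectivity of D
    have hDconn : ∀ x ∈ D, ∀ y ∈ D, Conn G D x y := by
      intro x hx y hy
      have h1 : Conn G D z x := Conn.restrict hzS0 (mem_cls.1 hx).2
      have h2 : Conn G D z y := Conn.restrict hzS0 (mem_cls.1 hy).2
      exact h1.symm.trans h2
    -- connectivity of R via hub v₀
    have hRhub : ∀ x ∈ R, Conn G R x v₀ := by
      intro x hx
      rcases eq_or_ne x v₀ with rfl | hxv
      · exact Conn.refl x
      obtain ⟨hxB, hxD⟩ := Finset.mem_sdiff.1 hx
      have hxS0 : x ∈ S0 := Finset.mem_erase.2 ⟨hxv, hxB⟩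
      obtain ⟨w, hwS0, hadj, hconn'⟩ := conn_to_neighbor hxS0 (hconn x hxB v₀ hv₀)
      have hwDx : w ∈ cls G S0 x := mem_cls.2 ⟨hwS0, hconn'⟩
      have hDxR : cls G S0 x ⊆ R := by
        intro y hy
        rcases mem_cls.1 hy with ⟨hyS0, hxy⟩
        refine Finset.mem_sdiff.2 ⟨(Finset.erase_subset _ _) hyS0, fun hyD => hxD ?_⟩
        exact mem_cls.2 ⟨hxS0, (mem_cls.1 hyD).2.trans hxy.symm⟩
      have h1 : Conn G R x w := (Conn.restrict hxS0 hconn').mono hDxR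
      exact h1.trans (conn_of_adj (hDxR hwDx) hv₀R hadj.symm)
    have hRconn : ∀ x ∈ R, ∀ y ∈ R, Conn G R x y :=
      fun x hx y hy => (hRhub x hx).trans (hRhub y hy).symm
    -- an edge between v₀ and D
    obtain ⟨w', hw'S0, hadj', hconn''⟩ := conn_to_neighbor hzS0 (hconn z hz v₀ hv₀)
    have hw'D : w' ∈ D := mem_cls.2 ⟨hw'S0, hconn''⟩
    -- split the count
    have hBDR : B = D ∪ R := by
      rw [hR, Finset.union_sdiff_of_subset hDB]
    have hdisj : Disjoint D R := Finset.disjoint_sdiff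
    have hcardsum : D.card + R.card = B.card := by
      rw [hBDR, Finset.card_union_of_disjoint hdisj]
    have hecB : ec G B = ec G D + ec G R + 2 * crossc G D R := by
      rw [hBDR]; exact ec_union G hdisj
    have hcross : 1 ≤ crossc G D R := crossc_pos G hw'D hv₀R hadj'.symm
    have hDn : D.card ≤ n := by
      have := Finset.card_le_card hDS0
      rw [Finset.card_erase_of_mem hv₀] at this
      omega
    have hRn : R.card ≤ n := by
      have h1 : R.card < B.card := Finset.card_lt_card (Finset.ssubset_iff_of_subset
        Finset.sdiff_subset |>.2 ⟨z, hz, hzR⟩)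
      omega
    have ihD := ih D hDn hDconn
    have ihR := ih R hRn hRconn
    have hD1 : 1 ≤ D.card := Finset.card_pos.2 ⟨z, hzD⟩
    have hR1 : 1 ≤ R.card := Finset.card_pos.2 ⟨v₀, hv₀R⟩
    omega

section Rat

lemma q_disc {ea eb a b : ℚ} (ha : 0 < a) (hb : 0 < b) (hea : 0 ≤ ea) (heb : 0 ≤ eb) :
    (ea + eb)/(a+b) ≤ ea/a + eb/b := by
  rw [div_add_div _ _ ha.ne' hb.ne', div_le_div_iff₀ (by linarith) (by positivity)]
  nlinarith [mul_nonneg hea (mul_pos hb hb).le, mul_nonneg heb (mul_pos ha ha).le]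

lemma q_clique {a y Eb : ℚ} (ha : 2 ≤ a) (hy : 2 ≤ y) (hEb : 2*(y-1) ≤ Eb) :
    (a*(a-1) + 2*a + Eb)/(a+y) ≤ (a*(a-1))/a + Eb/y := by
  have ha0 : (0:ℚ) < a := by linarith
  have hy0 : (0:ℚ) < y := by linarith
  have key : 0 ≤ (a-1)*(y*y) + a*Eb - 2*a*y := by
    have h1 : a*(2*(y-1)) ≤ a*Eb := mul_le_mul_of_nonneg_left hEb ha0.le
    have h4 : (2:ℚ)*2 ≤ y*y := mul_self_le_mul_self (by norm_num) hy
    have h5 : (a-1)*(2*2) ≤ (a-1)*(y*y) := mul_le_mul_of_nonneg_left h4 (by linarith)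
    nlinarith
  rw [div_add_div _ _ ha0.ne' hy0.ne', div_le_div_iff₀ (by linarith) (by positivity)]
  nlinarith [mul_nonneg ha0.le key]

lemma q_star {s x d Eb : ℚ} (hs : 1 ≤ s) (hx : 2 ≤ x) (hd1 : 1 ≤ d) (hdx : d ≤ x)
    (hEb1 : 2*(x-1) ≤ Eb) (hcase : d = 1 ∨ (2 ≤ d ∧ d*(d-1) ≤ Eb)) :
    (2*s + 2*d + Eb)/(s+1+x) ≤ 2*s/(s+1) + Eb/x := by
  have hp0 : (0:ℚ) < s + 1 := by linarith
  have hx0 : (0:ℚ) < x := by linarith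
  have hpp : (0:ℚ) ≤ (s+1)*(s+1) := by positivity
  have key : 0 ≤ 2*s*(x*x) + Eb*((s+1)*(s+1)) - 2*d*(s+1)*x := by
    rcases hcase with rfl | ⟨hd2, hEb2⟩
    · have h1 : (2*(x-1))*((s+1)*(s+1)) ≤ Eb*((s+1)*(s+1)) :=
        mul_le_mul_of_nonneg_right hEb1 hpp
      have h2 : x*((s+1)*(s+1)) ≤ (2*(x-1))*((s+1)*(s+1)) :=
        mul_le_mul_of_nonneg_right (by linarith) hpp
      have h3 : 2*(s+1) ≤ (s+1)*(s+1) :=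
        mul_le_mul_of_nonneg_right (by linarith) hp0.le
      have h4 : (2*(s+1))*x ≤ ((s+1)*(s+1))*x := mul_le_mul_of_nonneg_right h3 hx0.le
      nlinarith [mul_nonneg (mul_nonneg (by linarith : (0:ℚ) ≤ s) hx0.le) hx0.le]
    · have h1 : (d*(d-1))*((s+1)*(s+1)) ≤ Eb*((s+1)*(s+1)) :=
        mul_le_mul_of_nonneg_right hEb2 hpp
      have h2 : 2*(s+1) ≤ (s+1)*(s+1) :=
        mul_le_mul_of_nonneg_right (by linarith) hp0.le
      have h3 : (2*(s+1))*(d*(d-1)) ≤ ((s+1)*(s+1))*(d*(d-1)) :=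
        mul_le_mul_of_nonneg_right h2 (by nlinarith)
      have h4 : (s+1)*(x*x) ≤ 2*s*(x*x) :=
        mul_le_mul_of_nonneg_right (by linarith) (by positivity)
      have h5 : 0 ≤ (s+1)*((x-d)*(x-d)) := mul_nonneg hp0.le (mul_self_nonneg _)
      have h6 : 0 ≤ (s+1)*(d*d - 2*d) := mul_nonneg hp0.le (by nlinarith)
      nlinarith
  rw [div_add_div _ _ hp0.ne' hx0.ne', div_le_div_iff₀ (by linarith) (by positivity)]
  nlinarith [key]

end Rat

end Infra

section Structure2

variable {V : Type*} [DecidableEq V] {G : SimpleGraph V} [DecidableRel G.Adj]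

lemma clique_of_conn_small {W : Finset V} (hW : W.card ≤ 2)
    (hconn : ∀ x ∈ W, ∀ y ∈ W, Conn G W x y) : G.IsClique (W : Set V) := by
  intro x hx y hy hne
  have hx' : x ∈ W := hx
  have hy' : y ∈ W := hy
  obtain ⟨c, hstp, hcy⟩ := Conn.head_step hne (hconn x hx' y hy')
  have hWxy : W = {x, y} := by
    refine (Finset.eq_of_subset_of_card_le ?_ ?_).symm
    · intro t ht
      rcases Finset.mem_insert.1 ht with rfl | ht'
      · exact hx'
      · rwa [Finset.mem_singleton.1 ht']
    · calc W.card ≤ 2 := hW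
      _ = ({x, y} : Finset V).card := by rw [Finset.card_insert_of_notMem (by simpa using hne),
            Finset.card_singleton]
  have hcW : c ∈ W := hstp.2.1
  rw [hWxy] at hcW
  rcases Finset.mem_insert.1 hcW with rfl | hc'
  · exact absurd rfl (G.ne_of_adj hstp.2.2)
  · rw [Finset.mem_singleton.1 hc'] at hstp
    exact hstp.2.2

lemma exists_cut (hG : IsBlockGraph G) {W : Finset V} (h3 : 3 ≤ W.card)
    (hconn : ∀ x ∈ W, ∀ y ∈ W, Conn G W x y) (hnc : ¬ G.IsClique (W : Set V)) :
    ∃ v ∈ W, ∃ x ∈ W.erase v, ∃ y ∈ W.erase v, ¬ Conn G (W.erase v) x y := by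
  by_contra hcon
  push_neg at hcon
  apply hnc
  refine hG (W : Set V) (by rw [Set.ncard_coe_finset]; exact h3)
    (conn_induced (Finset.card_pos.1 (by omega)) hconn) ?_
  intro v hv
  have hv' : v ∈ W := hv
  rw [← Finset.coe_singleton, ← Finset.coe_sdiff, Finset.sdiff_singleton_eq_erase]
  refine conn_induced ?_ (hcon v hv')
  rw [← Finset.card_pos, Finset.card_erase_of_mem hv']
  omega

/-- a walk from a class member to `v` can be localized to the class plus `v` -/
lemma conn_localize {C : Finset V} {v u₀ v' : V} (hvD : v ∉ cls G (C.erase v) u₀)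
    (hv' : v' ≠ v) :
    ∀ x, Conn G (C.erase v') x v → x ∈ (cls G (C.erase v) u₀).erase v' →
      Conn G ((insert v (cls G (C.erase v) u₀)).erase v') x v := by
  set D := cls G (C.erase v) u₀ with hD
  intro x hc
  induction hc using Relation.ReflTransGen.head_induction_on with
  | refl => intro hx; exact absurd (Finset.mem_erase.1 hx).2 hvD
  | head hstep hconn ih =>
    rename_i a b
    intro ha
    obtain ⟨hav', haD⟩ := Finset.mem_erase.1 ha
    have haE : a ∈ (insert v D).erase v' :=
      Finset.mem_erase.2 ⟨hav', Finset.mem_insert_of_mem haD⟩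
    by_cases hb : b = v
    · subst hb
      refine Relation.ReflTransGen.single ⟨haE, ?_, hstep.2.2⟩
      exact Finset.mem_erase.2 ⟨Ne.symm hv', Finset.mem_insert_self _ _⟩
    · have hbC : b ∈ C.erase v' := hstep.2.1
      have hbS : b ∈ C.erase v :=
        Finset.mem_erase.2 ⟨hb, (Finset.mem_erase.1 hbC).2⟩
      have hbD : b ∈ D := cls_closed haD hbS hstep.2.2
      have hbe : b ∈ D.erase v' := Finset.mem_erase.2 ⟨(Finset.mem_erase.1 hbC).1, hbD⟩
      have hbE : b ∈ (insert v D).erase v' :=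
        Finset.mem_erase.2 ⟨(Finset.mem_erase.1 hbC).1, Finset.mem_insert_of_mem hbD⟩
      exact (conn_of_adj haE hbE hstep.2.2).trans (ih hbe)

end Structure2

section GoodCut

variable {V : Type*} [DecidableEq V] {G : SimpleGraph V} [DecidableRel G.Adj]

/-- cut vertex predicate -/
def IsCut (G : SimpleGraph V) (C : Finset V) (v : V) : Prop :=
  v ∈ C ∧ ∃ x ∈ C.erase v, ∃ y ∈ C.erase v, ¬ Conn G (C.erase v) x y

lemma exists_good_cut (hG : IsBlockGraph G) {C : Finset V}
    (hconn : ∀ x ∈ C, ∀ y ∈ C, Conn G C x y) (h3 : 3 ≤ C.card)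
    (hnc : ¬ G.IsClique (C : Set V)) :
    ∃ v, IsCut G C v ∧
      ∀ p ∈ C.erase v, ¬ G.IsClique (↑(insert v (cls G (C.erase v) p)) : Set V) →
        ∀ q ∈ C.erase v, ¬ Conn G (C.erase v) p q →
          G.IsClique (↑(insert v (cls G (C.erase v) q)) : Set V) := by
  classical
  -- first, some cut vertex exists
  obtain ⟨v₁, hv₁, hcut₁⟩ := exists_cut hG h3 hconn hnc
  set T : Finset (V × V) := (C ×ˢ C).filter
    (fun pr => IsCut G C pr.1 ∧ pr.2 ∈ C.erase pr.1 ∧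
      ¬ G.IsClique (↑(insert pr.1 (cls G (C.erase pr.1) pr.2)) : Set V)) with hT
  by_cases hTe : T = ∅
  · -- every class of every cut vertex is simple
    refine ⟨v₁, ⟨hv₁, hcut₁⟩, ?_⟩
    intro p hp hpns q hq hnpq
    exfalso
    apply hpns
    by_contra hpns'
    have : (v₁, p) ∈ T := by
      rw [hT, Finset.mem_filter]
      exact ⟨Finset.mem_product.2 ⟨hv₁, (Finset.mem_erase.1 hp).2⟩,
        ⟨hv₁, hcut₁⟩, hp, hpns'⟩
    rw [hTe] at this
    exact absurd this (Finset.notMem_empty _)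
  · -- take a minimal bad pair
    obtain ⟨pr, hprT, hmin⟩ := Finset.exists_min_image T
      (fun pr => (cls G (C.erase pr.1) pr.2).card) (Finset.nonempty_iff_ne_empty.2 hTe)
    obtain ⟨hprC, hcutv, hu₀, hDns⟩ := Finset.mem_filter.1 hprT
    obtain ⟨v, u₀⟩ := pr
    simp only at hcutv hu₀ hDns hmin ⊢
    set S : Finset V := C.erase v with hS
    set D : Finset V := cls G S u₀ with hD
    have hvC : v ∈ C := hcutv.1
    have hu₀S : u₀ ∈ S := hu₀
    have hu₀D : u₀ ∈ D := mem_cls_self hu₀S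
    have hDS : D ⊆ S := cls_subset
    have hvD : v ∉ D := fun h => (Finset.mem_erase.1 (hDS h)).1 rfl
    -- v has a neighbour w inside D
    obtain ⟨w, hwS, hadjvw, hconnw⟩ := conn_to_neighbor hu₀S (hconn u₀ ((Finset.erase_subset _ _) hu₀S) v hvC)
    have hwD : w ∈ D := mem_cls.2 ⟨hwS, hconnw⟩
    -- D has at least 2 elements
    have hD2 : 2 ≤ D.card := by
      by_contra hD1
      push_neg at hD1
      have hDsingle : D = {u₀} := by
        apply Finset.eq_singleton_iff_unique_mem.2
        refine ⟨hu₀D, fun t ht => ?_⟩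
        by_contra hne
        have : ({t, u₀} : Finset V) ⊆ D := by
          intro r hr
          rcases Finset.mem_insert.1 hr with rfl | hr'
          · exact ht
          · rwa [Finset.mem_singleton.1 hr']
        have := Finset.card_le_card this
        rw [Finset.card_insert_of_notMem (by simpa using hne), Finset.card_singleton] at this
        omega
      apply hDns
      have hw' : w = u₀ := by rwa [hDsingle, Finset.mem_singleton] at hwD
      subst hw'
      -- insert v {w} is a clique
      rw [hDsingle]
      intro a ha b hb hab
      simp only [Finset.coe_insert, Finset.coe_singleton, Set.mem_insert_iff,
        Set.mem_singleton_iff] at ha hb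
      rcases ha with rfl | rfl <;> rcases hb with rfl | rfl
      · exact absurd rfl hab
      · exact hadjvw
      · exact hadjvw.symm
      · exact absurd rfl hab
    set W : Finset V := insert v D with hW
    have hWD : D ⊆ W := Finset.subset_insert _ _
    have hvW : v ∈ W := Finset.mem_insert_self _ _
    -- connectivity of W via hub u₀
    have hWhub : ∀ x ∈ W, Conn G W u₀ x := by
      intro x hx
      rcases Finset.mem_insert.1 hx with rfl | hxD
      · exact ((Conn.restrict hu₀S hconnw).mono hWD).trans
          (conn_of_adj (hWD hwD) hvW hadjvw.symm)
      · exact (Conn.restrict hu₀S (mem_cls.1 hxD).2).mono hWD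
    have hWconn : ∀ x ∈ W, ∀ y ∈ W, Conn G W x y :=
      fun x hx y hy => (hWhub x hx).symm.trans (hWhub y hy)
    have hW3 : 3 ≤ W.card := by
      rw [hW, Finset.card_insert_of_notMem hvD]
      omega
    have hWnc : ¬ G.IsClique (W : Set V) := hDns
    -- cut vertex of W
    obtain ⟨v', hv'W, x, hx, y, hy, hnxy⟩ := exists_cut hG hW3 hWconn hWnc
    have hv'v : v' ≠ v := by
      rintro rfl
      apply hnxy
      rw [hW, Finset.erase_insert hvD] at hx hy ⊢
      exact ((Conn.restrict hu₀S (mem_cls.1 hx).2).symm.trans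
        (Conn.restrict hu₀S (mem_cls.1 hy).2))
    have hv'D : v' ∈ D := by
      rcases Finset.mem_insert.1 hv'W with rfl | h
      · exact absurd rfl hv'v
      · exact h
    have hvWe : v ∈ W.erase v' := Finset.mem_erase.2 ⟨Ne.symm hv'v, hvW⟩
    -- pick the witness not connected to v inside W.erase v'
    have hpick : ∃ x' ∈ W.erase v', x' ≠ v ∧ ¬ Conn G (W.erase v') x' v := by
      by_cases hxv : Conn G (W.erase v') x v
      · refine ⟨y, hy, ?_, ?_⟩
        · rintro rfl; exact hnxy hxv
        · intro hyv; exact hnxy (hxv.trans hyv.symm)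
      · refine ⟨x, hx, ?_, hxv⟩
        rintro rfl; exact hxv (Conn.refl _)
    obtain ⟨x', hx'We, hx'v, hnx'v⟩ := hpick
    have hx'D : x' ∈ D.erase v' := by
      obtain ⟨hxv', hxW⟩ := Finset.mem_erase.1 hx'We
      rcases Finset.mem_insert.1 hxW with rfl | h
      · exact absurd rfl hx'v
      · exact Finset.mem_erase.2 ⟨hxv', h⟩
    -- x' is not connected to v even in C.erase v'
    have hnx'vC : ¬ Conn G (C.erase v') x' v := by
      intro h
      exact hnx'v (conn_localize hvD hv'v x' h hx'D)
    -- v' is a cut vertex of C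
    have hv'C : v' ∈ C := (Finset.erase_subset _ _) (hDS hv'D)
    have hx'C : x' ∈ C.erase v' := by
      refine Finset.mem_erase.2 ⟨(Finset.mem_erase.1 hx'D).1, ?_⟩
      exact (Finset.erase_subset _ _) (hDS (Finset.mem_erase.1 hx'D).2)
    have hvCe : v ∈ C.erase v' := Finset.mem_erase.2 ⟨Ne.symm hv'v, hvC⟩
    have hcut' : IsCut G C v' := ⟨hv'C, x', hx'C, v, hvCe, hnx'vC⟩
    -- every vertex outside D (other than v) connects to v avoiding v'
    have houts : ∀ r ∈ C.erase v', r ∉ D → Conn G (C.erase v') r v := by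
      intro r hr hrD
      rcases eq_or_ne r v with rfl | hrv
      · exact Conn.refl r
      have hrS : r ∈ S := Finset.mem_erase.2 ⟨hrv, (Finset.mem_erase.1 hr).2⟩
      obtain ⟨w2, hw2S, hadj2, hconn2⟩ :=
        conn_to_neighbor hrS (hconn r ((Finset.erase_subset _ _) hrS) v hvC)
      have hDr_sub : cls G S r ⊆ C.erase v' := by
        intro t ht
        obtain ⟨htS, hconnt⟩ := mem_cls.1 ht
        refine Finset.mem_erase.2 ⟨?_, (Finset.erase_subset _ _) htS⟩
        rintro rfl
        exact hrD (mem_cls.2 ⟨hrS, (mem_cls.1 hv'D).2.trans hconnt.symm⟩)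
      have hw2r : w2 ∈ cls G S r := mem_cls.2 ⟨hw2S, hconn2⟩
      have h1 : Conn G (C.erase v') r w2 := (Conn.restrict hrS hconn2).mono hDr_sub
      exact h1.trans (conn_of_adj (hDr_sub hw2r) hvCe hadj2.symm)
    -- goodness of v'
    refine ⟨v', hcut', ?_⟩
    intro p hp hpns q hq hnpq
    by_contra hqns
    -- one of p, q is not connected to v within C.erase v'
    have hkey : ∀ r ∈ C.erase v', ¬ G.IsClique (↑(insert v' (cls G (C.erase v') r)) : Set V) →
        ¬ Conn G (C.erase v') r v → False := by
      intro r hr hrns hnrv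
      -- class of r is contained in D.erase v'
      have hsub : cls G (C.erase v') r ⊆ D.erase v' := by
        intro t ht
        obtain ⟨htC, hconnt⟩ := mem_cls.1 ht
        refine Finset.mem_erase.2 ⟨(Finset.mem_erase.1 htC).1, ?_⟩
        by_contra htD
        exact hnrv (hconnt.trans (houts t htC htD))
      have hcard : (cls G (C.erase v') r).card < D.card := by
        calc (cls G (C.erase v') r).card ≤ (D.erase v').card := Finset.card_le_card hsub
        _ < D.card := by rw [Finset.card_erase_of_mem hv'D]; have := Finset.card_pos.2 ⟨v', hv'D⟩; omega
      have : (v', r) ∈ T := by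
        rw [hT, Finset.mem_filter]
        exact ⟨Finset.mem_product.2 ⟨hv'C, (Finset.mem_erase.1 hr).2⟩, hcut', hr, hrns⟩
      have := hmin _ this
      simp only at this
      omega
    by_cases hpv : Conn G (C.erase v') p v
    · -- then q is not connected to v
      have hqv : ¬ Conn G (C.erase v') q v := fun h => hnpq (hpv.trans h.symm)
      exact hkey q hq hqns hqv
    · exact hkey p hp hpns hpv

end GoodCut

section Split

variable {V : Type*} [DecidableEq V] {G : SimpleGraph V} [DecidableRel G.Adj]

lemma uw_eq (S : Finset V) : uw G S = (ec G S : ℚ) / (S.card : ℚ) := rfl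

lemma exists_split (hG : IsBlockGraph G) {C : Finset V}
    (hnc : ¬ G.IsClique (C : Set V)) (hns : ¬ IsStar G C) :
    ∃ A : Finset V, A ⊆ C ∧ A.Nonempty ∧ A ≠ C ∧
      uw G C ≤ uw G A + uw G (C \ A) := by
  classical
  by_cases hconn : ∀ x ∈ C, ∀ y ∈ C, Conn G C x y
  case neg =>
    -- disconnected case
    push_neg at hconn
    obtain ⟨p, hp, q, hq, hnpq⟩ := hconn
    set A := cls G C p with hA
    set B := C \ A with hB
    have hAC : A ⊆ C := cls_subset
    have hpA : p ∈ A := mem_cls_self hp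
    have hqB : q ∈ B := Finset.mem_sdiff.2 ⟨hq, fun h => hnpq (mem_cls.1 h).2⟩
    have hcross : crossc G A B = 0 := by
      rw [crossc]
      refine Finset.sum_eq_zero fun a ha => Finset.sum_eq_zero fun b hb => ?_
      rw [if_neg]
      intro hadj
      exact (Finset.mem_sdiff.1 hb).2 (cls_closed ha (Finset.mem_sdiff.1 hb).1 hadj)
    have hdisj : Disjoint A B := Finset.disjoint_sdiff
    have hCAB : C = A ∪ B := (Finset.union_sdiff_of_subset hAC).symm
    have hecC : ec G C = ec G A + ec G B := by
      rw [hCAB, ec_union G hdisj, hcross]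
      omega
    have hcards : A.card + B.card = C.card := by
      rw [hCAB, Finset.card_union_of_disjoint hdisj]
    have hA0 : 0 < A.card := Finset.card_pos.2 ⟨p, hpA⟩
    have hB0 : 0 < B.card := Finset.card_pos.2 ⟨q, hqB⟩
    refine ⟨A, hAC, ⟨p, hpA⟩, fun h => (Finset.mem_sdiff.1 hqB).2 (h ▸ hq), ?_⟩
    rw [uw_eq, uw_eq, uw_eq, hecC]
    have hc : (C.card : ℚ) = (A.card : ℚ) + (B.card : ℚ) := by exact_mod_cast hcards.symm
    rw [hc]
    push_cast
    exact q_disc (by exact_mod_cast hA0) (by exact_mod_cast hB0)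
      (by positivity) (by positivity)
  case pos =>
    have h3 : 3 ≤ C.card := by
      by_contra h'
      exact hnc (clique_of_conn_small (by omega) hconn)
    obtain ⟨v, ⟨hvC, u, huS, w, hwS, hnuw⟩, hgood⟩ := exists_good_cut hG hconn h3 hnc
    set S : Finset V := C.erase v with hS
    have hSC : S ⊆ C := Finset.erase_subset _ _
    by_cases hbig : ∃ p ∈ S, G.IsClique (↑(insert v (cls G S p)) : Set V) ∧
        2 ≤ (cls G S p).card
    · -- case (i) : split off a big simple class (a clique)
      obtain ⟨p, hpS, hsimp, h2A⟩ := hbig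
      set A : Finset V := cls G S p with hA
      have hAS : A ⊆ S := cls_subset
      have hAC : A ⊆ C := hAS.trans hSC
      have hvA : v ∉ A := fun h => (Finset.mem_erase.1 (hAS h)).1 rfl
      have hAclq : G.IsClique (A : Set V) := by
        refine hsimp.subset ?_
        rw [Finset.coe_insert]
        exact Set.subset_insert _ _
      have hadjA : ∀ a ∈ A, G.Adj v a := by
        intro a ha
        refine hsimp (by simp) (by simp [ha]) ?_
        exact fun h => hvA (h ▸ ha)
      set B : Finset V := C \ A with hB
      have hvB : v ∈ B := Finset.mem_sdiff.2 ⟨hvC, hvA⟩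
      -- one of the cut witnesses is outside A
      have houtsA : ∃ s' ∈ S, s' ∉ A := by
        by_cases hu' : u ∈ A
        · refine ⟨w, hwS, fun hw' => hnuw ?_⟩
          exact ((mem_cls.1 hu').2.symm.trans (mem_cls.1 hw').2)
        · exact ⟨u, huS, hu'⟩
      obtain ⟨s', hs'S, hs'A⟩ := houtsA
      have hs'B : s' ∈ B := Finset.mem_sdiff.2 ⟨hSC hs'S, hs'A⟩
      have hB2 : 2 ≤ B.card := by
        have : ({v, s'} : Finset V) ⊆ B := by
          intro t ht
          rcases Finset.mem_insert.1 ht with rfl | ht'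
          · exact hvB
          · rwa [Finset.mem_singleton.1 ht']
        calc 2 = ({v, s'} : Finset V).card := by
              rw [Finset.card_insert_of_notMem
                (by simpa using fun h : v = s' => (Finset.mem_erase.1 hs'S).1 h.symm),
                Finset.card_singleton]
        _ ≤ B.card := Finset.card_le_card this
      -- connectivity of B via hub v
      have hBhub : ∀ x ∈ B, Conn G B x v := by
        intro x hx
        rcases eq_or_ne x v with rfl | hxv
        · exact Conn.refl x
        obtain ⟨hxC, hxA⟩ := Finset.mem_sdiff.1 hx
        have hxS : x ∈ S := Finset.mem_erase.2 ⟨hxv, hxC⟩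
        obtain ⟨w3, hw3S, hadj3, hconn3⟩ := conn_to_neighbor hxS (hconn x hxC v hvC)
        have hclsx : cls G S x ⊆ B := by
          intro t ht
          obtain ⟨htS, hconnt⟩ := mem_cls.1 ht
          refine Finset.mem_sdiff.2 ⟨hSC htS, fun htA => hxA ?_⟩
          exact mem_cls.2 ⟨hxS, (mem_cls.1 htA).2.trans hconnt.symm⟩
        have hw3x : w3 ∈ cls G S x := mem_cls.2 ⟨hw3S, hconn3⟩
        exact ((Conn.restrict hxS hconn3).mono hclsx).trans
          (conn_of_adj (hclsx hw3x) hvB hadj3.symm)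
      have hBconn : ∀ x ∈ B, ∀ y ∈ B, Conn G B x y :=
        fun x hx y hy => (hBhub x hx).trans (hBhub y hy).symm
      have hecB : 2 * (B.card - 1) ≤ ec G B := ec_lower B.card B le_rfl hBconn
      -- cross count
      have hcross : crossc G A B = A.card := by
        rw [crossc]
        have inner : ∀ a ∈ A, (∑ b ∈ B, if G.Adj a b then 1 else 0) = 1 := by
          intro a ha
          have hsummand : ∀ b ∈ B, (if G.Adj a b then (1:ℕ) else 0)
              = if b = v then 1 else 0 := by
            intro b hb
            rcases eq_or_ne b v with rfl | hbv
            · rw [if_pos (hadjA a ha).symm, if_pos rfl]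
            · rw [if_neg hbv, if_neg]
              intro hadj
              have hbS : b ∈ S := Finset.mem_erase.2 ⟨hbv, (Finset.mem_sdiff.1 hb).1⟩
              exact (Finset.mem_sdiff.1 hb).2 (cls_closed ha hbS hadj)
          rw [Finset.sum_congr rfl hsummand, Finset.sum_ite_eq' B v]
          simp [hvB]
        rw [Finset.sum_congr rfl inner]
        simp
      have hdisj : Disjoint A B := Finset.disjoint_sdiff
      have hCAB : C = A ∪ B := (Finset.union_sdiff_of_subset hAC).symm
      have hecC : ec G C = A.card * (A.card - 1) + ec G B + 2 * A.card := by
        rw [hCAB, ec_union G hdisj, hcross, ec_clique G hAclq]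
      have hcards : A.card + B.card = C.card := by
        rw [hCAB, Finset.card_union_of_disjoint hdisj]
      refine ⟨A, hAC, ⟨p, mem_cls_self hpS⟩, fun h => hvA (h.symm ▸ hvC), ?_⟩
      rw [uw_eq, uw_eq, uw_eq]
      have hc : (C.card : ℚ) = (A.card : ℚ) + (B.card : ℚ) := by exact_mod_cast hcards.symm
      have hEC : (ec G C : ℚ) = (A.card : ℚ) * ((A.card : ℚ) - 1) + 2 * (A.card : ℚ)
          + (ec G B : ℚ) := by
        rw [hecC]
        push_cast [Nat.cast_sub (by omega : 1 ≤ A.card)]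
        ring
      have hEA : (ec G A : ℚ) = (A.card : ℚ) * ((A.card : ℚ) - 1) := by
        rw [ec_clique G hAclq]
        push_cast [Nat.cast_sub (by omega : 1 ≤ A.card)]
        ring
      have hEB : 2 * ((B.card : ℚ) - 1) ≤ (ec G B : ℚ) := by
        have := hecB
        have h1 : (1:ℕ) ≤ B.card := by omega
        push_cast [Nat.cast_sub h1] at this ⊢
        exact_mod_cast this
      rw [hc, hEC, hEA]
      exact q_clique (by exact_mod_cast h2A) (by exact_mod_cast hB2) hEB
    · -- case (ii) : star split
      push_neg at hbig
      set L : Finset V := S.filter (fun z => cls G S z = {z}) with hL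
      set B : Finset V := S \ L with hB
      have hLS : L ⊆ S := Finset.filter_subset _ _
      have hvL : v ∉ L := fun h => (Finset.mem_erase.1 (hLS h)).1 rfl
      -- leaves are adjacent to v
      have hadjL : ∀ z ∈ L, G.Adj v z := by
        intro z hz
        obtain ⟨hzS, hclsz⟩ := Finset.mem_filter.1 hz
        have hzC : z ∈ C := hSC hzS
        have hzv : z ≠ v := (Finset.mem_erase.1 hzS).1
        obtain ⟨c, hstp, _⟩ := Conn.head_step hzv (hconn z hzC v hvC)
        by_cases hcv : c = v
        · subst hcv; exact hstp.2.2.symm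
        · exfalso
          have hcS : c ∈ S := Finset.mem_erase.2 ⟨hcv, hstp.2.1⟩
          have : c ∈ cls G S z := mem_cls.2 ⟨hcS, conn_of_adj hzS hcS hstp.2.2⟩
          rw [hclsz, Finset.mem_singleton] at this
          exact G.ne_of_adj hstp.2.2 this.symm
      -- leaves are independent
      have hindL : ∀ z1 ∈ L, ∀ z2 ∈ L, ¬ G.Adj z1 z2 := by
        intro z1 hz1 z2 hz2 hadj
        obtain ⟨hz1S, hcls1⟩ := Finset.mem_filter.1 hz1
        have hz2S : z2 ∈ S := hLS hz2
        have : z2 ∈ cls G S z1 := mem_cls.2 ⟨hz2S, conn_of_adj hz1S hz2S hadj⟩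
        rw [hcls1, Finset.mem_singleton] at this
        exact G.ne_of_adj hadj this.symm
      -- B is nonempty (otherwise C is a star)
      have hBne : B.Nonempty := by
        rw [Finset.nonempty_iff_ne_empty]
        intro hBe
        apply hns
        have hSL : S ⊆ L := by
          intro z hz
          by_contra hzL
          exact (Finset.notMem_empty z) (hBe ▸ Finset.mem_sdiff.2 ⟨hz, hzL⟩)
        refine ⟨v, hvC, fun z hz hzv => hadjL z (hSL (Finset.mem_erase.2 ⟨hzv, hz⟩)), ?_⟩
        intro z1 hz1 z2 hz2 hz1v hz2v
        exact hindL z1 (hSL (Finset.mem_erase.2 ⟨hz1v, hz1⟩))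
          z2 (hSL (Finset.mem_erase.2 ⟨hz2v, hz2⟩))
      obtain ⟨zs, hzsB⟩ := hBne
      -- members of B have non-simple classes
      have hnsimple : ∀ r ∈ B, ¬ G.IsClique (↑(insert v (cls G S r)) : Set V) := by
        intro r hr hsimp
        obtain ⟨hrS, hrL⟩ := Finset.mem_sdiff.1 hr
        have hrcls : cls G S r ≠ {r} := by
          intro h
          exact hrL (Finset.mem_filter.2 ⟨hrS, h⟩)
        have h2 : 2 ≤ (cls G S r).card := by
          by_contra hc1
          push_neg at hc1
          have h1 : (cls G S r).card = 1 := by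
            have hpos : 0 < (cls G S r).card := Finset.card_pos.2 ⟨r, mem_cls_self hrS⟩
            omega
          obtain ⟨t, hto⟩ := Finset.card_eq_one.1 h1
          apply hrcls
          have : r ∈ ({t} : Finset V) := hto ▸ mem_cls_self hrS
          rw [Finset.mem_singleton] at this
          rw [hto, this]
        have := hbig r hrS hsimp
        omega
      -- B is a single class
      have hBcls : B = cls G S zs := by
        obtain ⟨hzsS, hzsL⟩ := Finset.mem_sdiff.1 hzsB
        apply Finset.Subset.antisymm
        · intro x hx
          obtain ⟨hxS, hxL⟩ := Finset.mem_sdiff.1 hx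
          by_contra hxcls
          have hnconn : ¬ Conn G S zs x := fun h => hxcls (mem_cls.2 ⟨hxS, h⟩)
          exact hnsimple x hx (hgood zs hzsS (hnsimple zs hzsB) x hxS hnconn)
        · intro y hy
          obtain ⟨hyS, hconny⟩ := mem_cls.1 hy
          refine Finset.mem_sdiff.2 ⟨hyS, fun hyL => ?_⟩
          have hclsy : cls G S y = {y} := (Finset.mem_filter.1 hyL).2
          have : zs ∈ cls G S y := mem_cls.2 ⟨hzsS, hconny.symm⟩
          rw [hclsy, Finset.mem_singleton] at this
          apply hzsL
          rw [this]
          exact hyL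
      have hBS : B ⊆ S := Finset.sdiff_subset
      have hvB : v ∉ B := fun h => (Finset.mem_erase.1 (hBS h)).1 rfl
      have hzsS : zs ∈ S := hBS hzsB
      -- connectivity of B
      have hBconn : ∀ x ∈ B, ∀ y ∈ B, Conn G B x y := by
        intro x hx y hy
        rw [hBcls] at hx hy ⊢
        exact (Conn.restrict hzsS (mem_cls.1 hx).2).symm.trans
          (Conn.restrict hzsS (mem_cls.1 hy).2)
      -- B has at least 2 elements
      have hB2 : 2 ≤ B.card := by
        by_contra hc1
        push_neg at hc1
        have h1 : B.card = 1 := by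
          have hpos : 0 < B.card := Finset.card_pos.2 ⟨zs, hzsB⟩
          omega
        obtain ⟨t, hto⟩ := Finset.card_eq_one.1 h1
        have hts : zs = t := by
          have : zs ∈ ({t} : Finset V) := hto ▸ hzsB
          rwa [Finset.mem_singleton] at this
        have : cls G S zs = {zs} := by rw [← hBcls, hto, hts]
        exact (Finset.mem_sdiff.1 hzsB).2 (Finset.mem_filter.2 ⟨hzsS, this⟩)
      -- L is nonempty
      have hL1 : 1 ≤ L.card := by
        rw [Nat.one_le_iff_ne_zero, Ne, Finset.card_eq_zero]
        intro hLe
        have huB : u ∈ B := Finset.mem_sdiff.2 ⟨huS, by simp [hLe]⟩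
        have hwB : w ∈ B := Finset.mem_sdiff.2 ⟨hwS, by simp [hLe]⟩
        exact hnuw ((hBconn u huB w hwB).mono hBS)
      -- neighbours of v in B
      set N : Finset V := B.filter (fun y => G.Adj v y) with hN
      have hNB : N ⊆ B := Finset.filter_subset _ _
      have hd1 : 1 ≤ N.card := by
        obtain ⟨w4, hw4S, hadj4, hconn4⟩ := conn_to_neighbor hzsS (hconn zs (hSC hzsS) v hvC)
        have hw4B : w4 ∈ B := by
          rw [hBcls]
          exact mem_cls.2 ⟨hw4S, hconn4⟩
        exact Finset.card_pos.2 ⟨w4, Finset.mem_filter.2 ⟨hw4B, hadj4⟩⟩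
      have hNclq : G.IsClique (N : Set V) := by
        intro a ha b hb hne
        rw [Finset.mem_coe, Finset.mem_filter] at ha hb
        exact keyAdj hG hvB (hNB (Finset.mem_filter.2 ha)) (hNB (Finset.mem_filter.2 hb))
          ha.2 hb.2 hne (hBconn a ha.1 b hb.1)
      have hdx : N.card ≤ B.card := Finset.card_le_card hNB
      have hecB1 : 2 * (B.card - 1) ≤ ec G B := ec_lower B.card B le_rfl hBconn
      have hecB2 : N.card * (N.card - 1) ≤ ec G B := by
        calc N.card * (N.card - 1) = ec G N := (ec_clique G hNclq).symm
        _ ≤ ec G B := ec_mono G hNB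
      -- the star part A
      set A : Finset V := insert v L with hA
      have hAC : A ⊆ C := Finset.insert_subset hvC (hLS.trans hSC)
      have hcardA : A.card = L.card + 1 := Finset.card_insert_of_notMem hvL
      have hdisjvL : Disjoint ({v} : Finset V) L := by
        rw [Finset.disjoint_left]
        intro t ht
        rw [Finset.mem_singleton.1 ht]
        exact hvL
      have hecv : ec G ({v} : Finset V) = 0 := by
        rw [ec_eq_sum]
        simp [Finset.filter_singleton]
      have hecL : ec G L = 0 := by
        rw [ec_eq_sum]
        refine Finset.sum_eq_zero fun z1 hz1 => Finset.sum_eq_zero fun z2 hz2 => ?_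
        rw [if_neg (hindL z1 hz1 z2 hz2)]
      have hcrossvL : crossc G ({v} : Finset V) L = L.card := by
        rw [crossc, Finset.sum_singleton]
        rw [Finset.sum_congr rfl fun b hb => if_pos (hadjL b hb)]
        simp
      have hecA : ec G A = 2 * L.card := by
        rw [hA, Finset.insert_eq, ec_union G hdisjvL, hecv, hecL, hcrossvL]
        omega
      have hcrossvB : crossc G ({v} : Finset V) B = N.card := by
        rw [crossc, Finset.sum_singleton, hN, Finset.card_filter]
      have hcrossLB : crossc G L B = 0 := by
        rw [crossc]
        refine Finset.sum_eq_zero fun z hz => Finset.sum_eq_zero fun b hb => ?_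
        rw [if_neg]
        intro hadj
        have hbS : b ∈ S := hBS hb
        have : b ∈ cls G S z := mem_cls.2 ⟨hbS, conn_of_adj (hLS hz) hbS hadj⟩
        rw [(Finset.mem_filter.1 hz).2, Finset.mem_singleton] at this
        exact (Finset.mem_sdiff.1 hb).2 (this ▸ hz)
      have hcrossAB : crossc G A B = N.card := by
        rw [hA, Finset.insert_eq, crossc_union_left G hdisjvL, hcrossvB, hcrossLB]
        omega
      have hCAB : C = A ∪ B := by
        apply Finset.Subset.antisymm
        · intro t ht
          by_cases htv : t = v
          · exact Finset.mem_union_left _ (htv ▸ Finset.mem_insert_self _ _)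
          · have htS : t ∈ S := Finset.mem_erase.2 ⟨htv, ht⟩
            by_cases htL : t ∈ L
            · exact Finset.mem_union_left _ (Finset.mem_insert_of_mem htL)
            · exact Finset.mem_union_right _ (Finset.mem_sdiff.2 ⟨htS, htL⟩)
        · intro t ht
          rcases Finset.mem_union.1 ht with htA | htB
          · rcases Finset.mem_insert.1 htA with rfl | htL
            · exact hvC
            · exact hSC (hLS htL)
          · exact hSC (hBS htB)
      have hdisjAB : Disjoint A B := by
        rw [Finset.disjoint_left]
        intro t htA htB
        rcases Finset.mem_insert.1 htA with rfl | htL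
        · exact hvB htB
        · exact (Finset.mem_sdiff.1 htB).2 htL
      have hecC : ec G C = 2 * L.card + ec G B + 2 * N.card := by
        rw [hCAB, ec_union G hdisjAB, hecA, hcrossAB]
      have hcards : A.card + B.card = C.card := by
        rw [hCAB, Finset.card_union_of_disjoint hdisjAB]
      have hCA_B : C \ A = B := by
        rw [hCAB, Finset.union_sdiff_cancel_left hdisjAB]
      have hzsA : zs ∉ A := by
        intro h
        rcases Finset.mem_insert.1 h with rfl | hzL
        · exact (Finset.mem_erase.1 hzsS).1 rfl
        · exact (Finset.mem_sdiff.1 hzsB).2 hzL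
      refine ⟨A, hAC, ⟨v, Finset.mem_insert_self _ _⟩,
        fun h => hzsA (h.symm ▸ (hSC hzsS)), ?_⟩
      rw [hCA_B, uw_eq, uw_eq, uw_eq]
      have hc : (C.card : ℚ) = (L.card : ℚ) + 1 + (B.card : ℚ) := by
        have : C.card = L.card + 1 + B.card := by omega
        exact_mod_cast congrArg (Nat.cast : ℕ → ℚ) this
      have hcA : (A.card : ℚ) = (L.card : ℚ) + 1 := by exact_mod_cast hcardA
      have hEC : (ec G C : ℚ) = 2 * (L.card : ℚ) + 2 * (N.card : ℚ) + (ec G B : ℚ) := by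
        rw [hecC]
        push_cast
        ring
      have hEA : (ec G A : ℚ) = 2 * (L.card : ℚ) := by
        rw [hecA]
        push_cast
        ring
      rw [hc, hcA, hEC, hEA]
      refine q_star (by exact_mod_cast hL1) (by exact_mod_cast hB2)
        (by exact_mod_cast hd1) (by exact_mod_cast hdx) ?_ ?_
      · have h1 : (1:ℕ) ≤ B.card := by omega
        have := hecB1
        push_cast [Nat.cast_sub h1] at this ⊢
        exact_mod_cast this
      · rcases Nat.lt_or_ge N.card 2 with hd | hd
        · left
          have : N.card = 1 := by omega
          exact_mod_cast congrArg (Nat.cast : ℕ → ℚ) this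
        · right
          constructor
          · exact_mod_cast hd
          · have h1 : (1:ℕ) ≤ N.card := by omega
            have := hecB2
            push_cast [Nat.cast_sub h1] at this ⊢
            exact_mod_cast this

end Split

section Main

variable {V : Type*} [DecidableEq V] {G : SimpleGraph V} [DecidableRel G.Adj]

/-- combine two finpartitions of disjoint finsets -/
def combinePart {A B : Finset V} (h : Disjoint A B) (P : Finpartition A) (Q : Finpartition B) :
    Finpartition (A ∪ B) where
  parts := P.parts ∪ Q.parts
  supIndep := by
    rw [Finset.supIndep_iff_pairwiseDisjoint]
    intro x hx y hy hxy
    rw [Finset.coe_union, Set.mem_union] at hx hy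
    rcases hx with hx | hx <;> rcases hy with hy | hy
    · exact P.disjoint hx hy hxy
    · exact h.mono (P.le hx) (Q.le hy)
    · exact h.symm.mono (Q.le hx) (P.le hy)
    · exact Q.disjoint hx hy hxy
  sup_parts := by rw [Finset.sup_union, P.sup_parts, Q.sup_parts]; rfl
  bot_notMem := by
    rw [Finset.mem_union]
    rintro (h' | h')
    exacts [P.bot_notMem h', Q.bot_notMem h']

lemma uw_empty : uw G (∅ : Finset V) = 0 := by
  simp [uw]

lemma main_partition (hG : IsBlockGraph G) : ∀ (n : ℕ) (C : Finset V), C.card ≤ n →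
    ∃ P : Finpartition C, (∀ D ∈ P.parts, G.IsClique (D : Set V) ∨ IsStar G D) ∧
      uw G C ≤ ∑ D ∈ P.parts, uw G D := by
  intro n
  induction n with
  | zero =>
    intro C hC
    have hCe : C = ∅ := Finset.card_eq_zero.1 (Nat.le_antisymm hC (Nat.zero_le _))
    subst hCe
    refine ⟨(Finpartition.empty (Finset V)).copy rfl, ?_, ?_⟩
    · intro D hD
      simp [Finpartition.copy, Finpartition.empty] at hD
    · rw [uw_empty]
      apply le_of_eq
      simp [Finpartition.copy, Finpartition.empty]
  | succ n ih =>
    intro C hC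
    rcases eq_or_ne C ∅ with rfl | hCne
    · refine ⟨(Finpartition.empty (Finset V)).copy rfl, ?_, ?_⟩
      · intro D hD
        simp [Finpartition.copy, Finpartition.empty] at hD
      · rw [uw_empty]
        apply le_of_eq
        simp [Finpartition.copy, Finpartition.empty]
    · by_cases hcs : G.IsClique (C : Set V) ∨ IsStar G C
      · refine ⟨Finpartition.indiscrete (by simpa using hCne), ?_, ?_⟩
        · intro D hD
          rw [Finpartition.indiscrete_parts, Finset.mem_singleton] at hD
          subst hD
          exact hcs
        · rw [Finpartition.indiscrete_parts, Finset.sum_singleton]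
      · push_neg at hcs
        obtain ⟨A, hAC, hAne, hAneC, hineq⟩ := exists_split hG hcs.1 hcs.2
        set B : Finset V := C \ A with hB
        have hdisj : Disjoint A B := Finset.disjoint_sdiff
        have hcardC : 0 < C.card := Finset.card_pos.2 (Finset.nonempty_iff_ne_empty.2 hCne)
        have hcardA : A.card ≤ n := by
          have : A.card < C.card :=
            Finset.card_lt_card (Finset.ssubset_iff_subset_ne.2 ⟨hAC, hAneC⟩)
          omega
        have hcardB : B.card ≤ n := by
          obtain ⟨a, ha⟩ := hAne
          have haB : a ∉ B := fun h => (Finset.mem_sdiff.1 h).2 ha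
          have : B.card < C.card :=
            Finset.card_lt_card (Finset.ssubset_iff_subset_ne.2
              ⟨Finset.sdiff_subset, fun h => haB (h.symm ▸ hAC ha)⟩)
          omega
        obtain ⟨PA, hPA1, hPA2⟩ := ih A hcardA
        obtain ⟨PB, hPB1, hPB2⟩ := ih B hcardB
        have hunion : A ∪ B = C := Finset.union_sdiff_of_subset hAC
        have hdparts : Disjoint PA.parts PB.parts := by
          rw [Finset.disjoint_left]
          intro D hD1 hD2
          exact PA.ne_bot hD1 (le_bot_iff.1 (hdisj (PA.le hD1) (PB.le hD2)))
        refine ⟨(combinePart hdisj PA PB).copy hunion, ?_, ?_⟩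
        · intro D hD
          have hD' : D ∈ PA.parts ∪ PB.parts := hD
          rcases Finset.mem_union.1 hD' with h | h
          · exact hPA1 D h
          · exact hPB1 D h
        · have hparts : ((combinePart hdisj PA PB).copy hunion).parts
              = PA.parts ∪ PB.parts := rfl
          rw [hparts, Finset.sum_union hdparts]
          calc uw G C ≤ uw G A + uw G B := hineq
          _ ≤ _ := add_le_add hPA2 hPB2

end Main

/-- On a finite block graph there is a utilitarian-welfare-maximizing partition of the
vertex set all of whose parts induce cliques or stars. -/
theorem exists_max_utilitarian_partition_clique_or_star
    {V : Type*} [Fintype V] [DecidableEq V] (G : SimpleGraph V) [DecidableRel G.Adj]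
    (hG : IsBlockGraph G) :
    ∃ P : Finpartition (Finset.univ : Finset V),
      (∀ Q : Finpartition (Finset.univ : Finset V),
        ∑ C ∈ Q.parts, uw G C ≤ ∑ C ∈ P.parts, uw G C) ∧
      ∀ C ∈ P.parts, G.IsClique (C : Set V) ∨ IsStar G C := by
  classical
  have main : ∀ A : Finset V, ∃ P : Finpartition A,
      (∀ D ∈ P.parts, G.IsClique (D : Set V) ∨ IsStar G D) ∧
      uw G A ≤ ∑ D ∈ P.parts, uw G D := fun A => main_partition hG A.card A le_rfl
  haveI : Fintype (Finpartition (Finset.univ : Finset V)) :=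
    Fintype.ofInjective (fun P => P.parts) (fun P Q h => Finpartition.ext h)
  haveI : Nonempty (Finpartition (Finset.univ : Finset V)) := ⟨(main Finset.univ).choose⟩
  obtain ⟨Qmax, hQmax⟩ := Finite.exists_max
    (fun Q : Finpartition (Finset.univ : Finset V) => ∑ C ∈ Q.parts, uw G C)
  set F : ∀ A : Finset V, Finpartition A := fun A => (main A).choose with hF
  have hF1 : ∀ A : Finset V, ∀ D ∈ (F A).parts, G.IsClique (D : Set V) ∨ IsStar G D :=
    fun A => (main A).choose_spec.1
  have hF2 : ∀ A : Finset V, uw G A ≤ ∑ D ∈ (F A).parts, uw G D :=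
    fun A => (main A).choose_spec.2
  refine ⟨Qmax.bind (fun A _ => F A), ?_, ?_⟩
  · intro Q
    refine le_trans (hQmax Q) ?_
    have hparts : (Qmax.bind (fun A _ => F A)).parts
        = Qmax.parts.attach.biUnion (fun i => (F i.1).parts) := rfl
    have hpd : (↑Qmax.parts.attach : Set {x // x ∈ Qmax.parts}).PairwiseDisjoint
        (fun i => (F i.1).parts) := by
      intro i _ j _ hij
      rw [Function.onFun, Finset.disjoint_left]
      intro D hDi hDj
      have hne : D ≠ ⊥ := (F i.1).ne_bot hDi
      have hd : Disjoint i.1 j.1 := Qmax.disjoint i.2 j.2 (fun h => hij (Subtype.ext h))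
      exact hne (le_bot_iff.1 (hd ((F i.1).le hDi) ((F j.1).le hDj)))
    rw [hparts, Finset.sum_biUnion hpd]
    calc ∑ C ∈ Qmax.parts, uw G C = ∑ i ∈ Qmax.parts.attach, uw G i.1 :=
          (Finset.sum_attach _ _).symm
    _ ≤ ∑ i ∈ Qmax.parts.attach, ∑ D ∈ (F i.1).parts, uw G D :=
          Finset.sum_le_sum fun i _ => hF2 i.1
  · intro D hD
    rw [Finpartition.mem_bind] at hD
    obtain ⟨A, hA, hD'⟩ := hD
    exact hF1 A D hD'
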